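/- Let F(t), G(t) be real power series convergent on |t| < r with G having nonnegative coefficients, G(0) > 0, G'(0) > 0. Let I be a compact subset of [0, r) on which F is positive. Then for all sufficiently large l, the function a \mapsto F(a) G(a)^l + F(-a) G(-a)^l is positive on I. -/
import Mathlib

private lemma abs_summable_aux {c : ℕ → ℝ} {r ρ : ℝ}
    (hc : ∀ t : ℝ, |t| < r → Summable fun n => c n * t ^ n)
    (h0 : 0 ≤ ρ) (hρ : ρ < r) :
    Summable fun n => |c n| * ρ ^ n := by
  set σ : ℝ := (ρ + r) / 2 with hσ
  have hσ0 : 0 < σ := by simp only [hσ]; linarith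
  have hρσ : ρ < σ := by simp only [hσ]; linarith
  have hσr : σ < r := by simp only [hσ]; linarith
  have hsum : Summable fun n => c n * σ ^ n := hc σ (by rw [abs_of_nonneg hσ0.le]; exact hσr)
  have htend : Filter.Tendsto (fun n => |c n * σ ^ n|) Filter.atTop (nhds 0) := by
    simpa using hsum.tendsto_atTop_zero.abs
  obtain ⟨C, hC⟩ := htend.bddAbove_range
  have hCub : ∀ n, |c n| * σ ^ n ≤ C := by
    intro n
    have := hC (Set.mem_range_self n)
    rwa [abs_mul, abs_of_nonneg (pow_nonneg hσ0.le n)] at this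
  have hgeo : Summable fun n : ℕ => C * (ρ / σ) ^ n :=
    (summable_geometric_of_lt_one (div_nonneg h0 hσ0.le)
      ((div_lt_one hσ0).2 hρσ)).mul_left C
  apply Summable.of_nonneg_of_le (fun n => by positivity) _ hgeo
  intro n
  have hmd : σ * (ρ / σ) = ρ := by field_simp
  have key : |c n| * ρ ^ n = (|c n| * σ ^ n) * (ρ / σ) ^ n := by
    rw [mul_assoc, ← mul_pow, hmd]
  rw [key]
  exact mul_le_mul_of_nonneg_right (hCub n) (by positivity)

private lemma contOn_aux {c : ℕ → ℝ} {r ρ : ℝ}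
    (hc : ∀ t : ℝ, |t| < r → Summable fun n => c n * t ^ n)
    (h0 : 0 ≤ ρ) (hρ : ρ < r) :
    ContinuousOn (fun t => ∑' n, c n * t ^ n) (Set.Icc (-ρ) ρ) := by
  apply continuousOn_tsum (u := fun n => |c n| * ρ ^ n)
  · exact fun n => (continuous_const.mul (continuous_pow n)).continuousOn
  · exact abs_summable_aux hc h0 hρ
  · intro n t ht
    rw [Real.norm_eq_abs, abs_mul, abs_pow]
    have h1 : |t| ≤ ρ := abs_le.2 ⟨ht.1, ht.2⟩
    exact mul_le_mul_of_nonneg_left (pow_le_pow_left₀ (abs_nonneg t) h1 n) (abs_nonneg _)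

/-- Let `F, G` be real power series convergent on `|t| < r`, with `G` having
nonnegative coefficients and `G(0) > 0`, `G'(0) > 0`.  If `I ⊆ [0, r)` is compact
and `F > 0` on `I`, then for all sufficiently large `l`,
`F(a) G(a)^l + F(-a) G(-a)^l > 0` on `I`. -/
theorem stmt_13 (F G : ℕ → ℝ) (r : ℝ)
    (hFconv : ∀ t : ℝ, |t| < r → Summable fun n => F n * t ^ n)
    (hGconv : ∀ t : ℝ, |t| < r → Summable fun n => G n * t ^ n)
    (hGpos : ∀ n, 0 ≤ G n) (hG0 : 0 < G 0) (hG1 : 0 < G 1)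
    (I : Set ℝ) (hIcompact : IsCompact I) (hIsub : I ⊆ Set.Ico 0 r)
    (hFposI : ∀ a ∈ I, 0 < ∑' n, F n * a ^ n) :
    ∃ L : ℕ, ∀ l : ℕ, L ≤ l → ∀ a ∈ I,
      0 < (∑' n, F n * a ^ n) * (∑' n, G n * a ^ n) ^ l +
        (∑' n, F n * (-a) ^ n) * (∑' n, G n * (-a) ^ n) ^ l := by
  rcases Set.eq_empty_or_nonempty I with hIe | hIne
  · exact ⟨0, fun l _ a ha => absurd ha (hIe ▸ Set.notMem_empty a)⟩
  obtain ⟨ρ, hρI, hρmax⟩ := hIcompact.exists_isMaxOn hIne continuousOn_id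
  have hρ0 : 0 ≤ ρ := (hIsub hρI).1
  have hρr : ρ < r := (hIsub hρI).2
  set f : ℝ → ℝ := fun t => ∑' n, F n * t ^ n with hfdef
  set g : ℝ → ℝ := fun t => ∑' n, G n * t ^ n with hgdef
  have hfc : ContinuousOn f (Set.Icc (-ρ) ρ) := contOn_aux hFconv hρ0 hρr
  have hgc : ContinuousOn g (Set.Icc (-ρ) ρ) := contOn_aux hGconv hρ0 hρr
  have hIsubIcc : I ⊆ Set.Icc (-ρ) ρ := by
    intro a ha
    have h1 : 0 ≤ a := (hIsub ha).1
    have h2 : a ≤ ρ := hρmax ha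
    exact ⟨by linarith, h2⟩
  have hnegmaps : Set.MapsTo (fun a : ℝ => -a) (Set.Icc (-ρ) ρ) (Set.Icc (-ρ) ρ) := by
    intro x hx
    simp only [Set.mem_Icc] at hx ⊢
    exact ⟨by linarith [hx.2], by linarith [hx.1]⟩
  have hfnc : ContinuousOn (fun a => f (-a)) (Set.Icc (-ρ) ρ) :=
    hfc.comp continuous_neg.continuousOn hnegmaps
  have hgnc : ContinuousOn (fun a => g (-a)) (Set.Icc (-ρ) ρ) :=
    hgc.comp continuous_neg.continuousOn hnegmaps
  have habs : ∀ a ∈ I, |a| < r ∧ |(-a : ℝ)| < r := by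
    intro a ha
    have h1 : 0 ≤ a := (hIsub ha).1
    have h2 : a < r := (hIsub ha).2
    rw [abs_neg, abs_of_nonneg h1]
    exact ⟨h2, h2⟩
  have hgpos : ∀ a ∈ I, 0 < g a := by
    intro a ha
    have h0 : 0 ≤ a := (hIsub ha).1
    have hsa : Summable fun n => G n * a ^ n := hGconv a (habs a ha).1
    have hle := Summable.le_tsum hsa 0 (fun j _ => by
      have := hGpos j; positivity)
    simp only [pow_zero, mul_one] at hle
    exact lt_of_lt_of_le hG0 hle
  have hkey : ∀ a ∈ I, 0 < a → |g (-a)| < g a := by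
    intro a ha ha0
    have h0 : (0:ℝ) ≤ a := ha0.le
    have hsa : Summable fun n => G n * a ^ n := hGconv a (habs a ha).1
    have hsna : Summable fun n => G n * (-a) ^ n := hGconv (-a) (habs a ha).2
    have hle : ∀ n, |G n * (-a) ^ n| ≤ G n * a ^ n := by
      intro n
      rw [abs_mul, abs_of_nonneg (hGpos n), abs_pow, abs_neg, abs_of_nonneg h0]
    have hga : (∑' n, G n * a ^ n) = g a := rfl
    have hgna : (∑' n, G n * (-a) ^ n) = g (-a) := rfl
    have h1 : 2 * (G 1 * a) ≤ g a - g (-a) := by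
      have ht := Summable.le_tsum (hsa.sub hsna) 1 (fun j _ =>
        sub_nonneg.2 ((le_abs_self _).trans (hle j)))
      rw [Summable.tsum_sub hsa hsna, hga, hgna] at ht
      simp only [pow_one] at ht
      have hr : G 1 * -a = -(G 1 * a) := by ring
      rw [hr] at ht
      linarith
    have h2 : 2 * G 0 ≤ g a + g (-a) := by
      have ht := Summable.le_tsum (hsa.add hsna) 0 (fun j _ => by
        have := neg_abs_le (G j * (-a) ^ j)
        have := hle j
        have := hGpos j
        nlinarith [pow_nonneg h0 j])
      rw [Summable.tsum_add hsa hsna, hga, hgna] at ht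
      simp only [pow_zero, mul_one] at ht
      linarith
    rw [abs_lt]
    constructor <;> nlinarith [mul_pos hG1 ha0]
  -- find ε such that f(-a), g(-a) > 0 for a ∈ I with a < ε
  obtain ⟨ε, hε0, hεP⟩ : ∃ ε > 0, ∀ a ∈ I, a < ε → 0 < f (-a) ∧ 0 < g (-a) := by
    by_cases h0I : (0:ℝ) ∈ I
    · have hf0 : 0 < f 0 := hFposI 0 h0I
      have hg0 : 0 < g 0 := hgpos 0 h0I
      have hcwf : ContinuousWithinAt (fun a => f (-a)) I 0 :=
        (hfnc 0 (hIsubIcc h0I)).mono hIsubIcc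
      have hcwg : ContinuousWithinAt (fun a => g (-a)) I 0 :=
        (hgnc 0 (hIsubIcc h0I)).mono hIsubIcc
      have hev : ∀ᶠ a in nhdsWithin 0 I, 0 < f (-a) ∧ 0 < g (-a) := by
        have e1 : ∀ᶠ a in nhdsWithin 0 I, 0 < f (-a) := by
          apply hcwf.eventually (lt_mem_nhds (by simpa using hf0))
        have e2 : ∀ᶠ a in nhdsWithin 0 I, 0 < g (-a) := by
          apply hcwg.eventually (lt_mem_nhds (by simpa using hg0))
        exact e1.and e2
      rw [eventually_nhdsWithin_iff, Metric.eventually_nhds_iff] at hev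
      obtain ⟨ε, hε0, hε⟩ := hev
      refine ⟨ε, hε0, fun a ha haε => ?_⟩
      have h0a : 0 ≤ a := (hIsub ha).1
      exact hε (by rw [Real.dist_eq, sub_zero, abs_of_nonneg h0a]; exact haε) ha
    · obtain ⟨ε, hε0, hε⟩ := Metric.isOpen_iff.1 hIcompact.isClosed.isOpen_compl 0 h0I
      refine ⟨ε, hε0, fun a ha haε => ?_⟩
      have h0a : 0 ≤ a := (hIsub ha).1
      have hmem : a ∈ Metric.ball (0:ℝ) ε := by
        rw [Metric.mem_ball, Real.dist_eq, sub_zero, abs_of_nonneg h0a]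
        exact haε
      exact absurd ha (hε hmem)
  set I' := I ∩ Set.Ici ε with hI'def
  have hI'sub : I' ⊆ I := Set.inter_subset_left
  have hI'c : IsCompact I' := hIcompact.inter_right isClosed_Ici
  have hI'Icc : I' ⊆ Set.Icc (-ρ) ρ := fun a ha => hIsubIcc (hI'sub ha)
  rcases Set.eq_empty_or_nonempty I' with hI'e | hI'ne
  · refine ⟨0, fun l _ a ha => ?_⟩
    have haε : a < ε := by
      by_contra h
      exact (hI'e ▸ Set.notMem_empty a) ⟨ha, not_lt.1 h⟩
    obtain ⟨hf', hg'⟩ := hεP a ha haε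
    exact add_pos (mul_pos (hFposI a ha) (pow_pos (hgpos a ha) l))
      (mul_pos hf' (pow_pos hg' l))
  · have hq : ContinuousOn (fun a => |g (-a)| / g a) I' :=
      ((hgnc.mono hI'Icc).abs.div (hgc.mono hI'Icc)
        (fun a ha => (hgpos a (hI'sub ha)).ne'))
    obtain ⟨a0, ha0, hq0max⟩ := hI'c.exists_isMaxOn hI'ne hq
    set q0 : ℝ := |g (-a0)| / g a0 with hq0def
    have ha0pos : 0 < a0 := lt_of_lt_of_le hε0 ha0.2
    have hq01 : q0 < 1 :=
      (div_lt_one (hgpos a0 (hI'sub ha0))).2 (hkey a0 (hI'sub ha0) ha0pos)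
    have hq00 : 0 ≤ q0 := div_nonneg (abs_nonneg _) (hgpos a0 (hI'sub ha0)).le
    have hqle : ∀ a ∈ I', |g (-a)| ≤ q0 * g a := by
      intro a ha
      have h : |g (-a)| / g a ≤ q0 := hq0max ha
      rwa [div_le_iff₀ (hgpos a (hI'sub ha))] at h
    obtain ⟨am, ham, hmmin⟩ := hI'c.exists_isMinOn hI'ne (hfc.mono hI'Icc)
    set m : ℝ := f am with hmdef
    have hm : 0 < m := hFposI am (hI'sub ham)
    obtain ⟨aM, haM, hMmax⟩ := hI'c.exists_isMaxOn hI'ne (hfnc.mono hI'Icc).abs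
    set M : ℝ := |f (-aM)| with hMdef
    have hM0 : 0 ≤ M := abs_nonneg _
    obtain ⟨L, hL⟩ := exists_pow_lt_of_lt_one (div_pos hm (by linarith : (0:ℝ) < M + 1)) hq01
    refine ⟨L, fun l hl a ha => ?_⟩
    by_cases haI' : a ∈ I'
    · have hB : 0 < g a := hgpos a ha
      have hBl : 0 < g a ^ l := pow_pos hB l
      have hA : m ≤ f a := hmmin haI'
      have hC : |f (-a)| ≤ M := hMmax haI'
      have hD : |g (-a)| ≤ q0 * g a := hqle a haI'
      have hql : q0 ^ l ≤ q0 ^ L := pow_le_pow_of_le_one hq00 hq01.le hl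
      have hMq : M * q0 ^ l < m := by
        rw [lt_div_iff₀ (by linarith : (0:ℝ) < M + 1)] at hL
        nlinarith [pow_nonneg hq00 L, pow_nonneg hq00 l]
      have h1 : -(M * q0 ^ l * g a ^ l) ≤ f (-a) * g (-a) ^ l := by
        have habs2 : |f (-a) * g (-a) ^ l| ≤ M * q0 ^ l * g a ^ l := by
          rw [abs_mul, abs_pow]
          calc |f (-a)| * |g (-a)| ^ l ≤ M * (q0 * g a) ^ l := by
                exact mul_le_mul hC (pow_le_pow_left₀ (abs_nonneg _) hD l)
                  (pow_nonneg (abs_nonneg _) l) hM0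
            _ = M * q0 ^ l * g a ^ l := by rw [mul_pow, mul_assoc]
        linarith [neg_abs_le (f (-a) * g (-a) ^ l)]
      have h2 : m * g a ^ l ≤ f a * g a ^ l := mul_le_mul_of_nonneg_right hA hBl.le
      nlinarith [mul_pos (sub_pos.2 hMq) hBl]
    · have haε : a < ε := by
        by_contra h
        exact haI' ⟨ha, not_lt.1 h⟩
      obtain ⟨hf', hg'⟩ := hεP a ha haε
      exact add_pos (mul_pos (hFposI a ha) (pow_pos (hgpos a ha) l))
        (mul_pos hf' (pow_pos hg' l))
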